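/- For the all-ones vector 𝟙 ∈ ℝ^n, t > 0 and y ∈ ℝ^n, define F(y) as the limit as ε → 0⁺ of 𝟙ᵀ (𝟙𝟙ᵀ + εI)⁻¹ (I - exp(-t𝟙𝟙ᵀ)) y. Then F(y) = (1 - e^{-tn}) · ȳ, where ȳ = (1/n) Σᵢ yᵢ. -/

import Mathlib

open Matrix Filter

section aux
variable {n : ℕ}

lemma J_mul_J (n : ℕ) : (Matrix.of fun _ _ => (1:ℝ) : Matrix (Fin n) (Fin n) ℝ) * (Matrix.of fun _ _ => (1:ℝ)) = (n:ℝ) • (Matrix.of fun _ _ => (1:ℝ)) := by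
  ext i j; simp [Matrix.mul_apply]

lemma J_pow (n : ℕ) (k : ℕ) : (Matrix.of fun _ _ => (1:ℝ) : Matrix (Fin n) (Fin n) ℝ) ^ (k+1) = ((n:ℝ)^k) • (Matrix.of fun _ _ => (1:ℝ)) := by
  induction k with
  | zero => simp
  | succ k ih =>
      rw [pow_succ, ih, Matrix.smul_mul, J_mul_J, pow_succ]
      rw [smul_smul]

lemma exp_smul_J (n : ℕ) (hn : 0 < n) (c : ℝ) :
    NormedSpace.exp (c • (Matrix.of fun _ _ => (1:ℝ) : Matrix (Fin n) (Fin n) ℝ)) =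
      1 + ((Real.exp (c * n) - 1) / n) • (Matrix.of fun _ _ => (1:ℝ)) := by
  letI : SeminormedRing (Matrix (Fin n) (Fin n) ℝ) := Matrix.linftyOpSemiNormedRing
  letI : NormedRing (Matrix (Fin n) (Fin n) ℝ) := Matrix.linftyOpNormedRing
  letI : NormedAlgebra ℝ (Matrix (Fin n) (Fin n) ℝ) := Matrix.linftyOpNormedAlgebra
  set J : Matrix (Fin n) (Fin n) ℝ := Matrix.of fun _ _ => (1:ℝ) with hJ
  have hsum : Summable fun k : ℕ => ((Nat.factorial k : ℝ))⁻¹ • (c • J) ^ k :=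
    NormedSpace.expSeries_summable' (𝕂 := ℝ) (c • J)
  rw [NormedSpace.exp_eq_tsum ℝ]
  beta_reduce
  rw [Summable.tsum_eq_zero_add hsum]
  have h1 : ∀ k : ℕ, ((Nat.factorial (k+1) : ℝ))⁻¹ • (c • J) ^ (k+1) = ((c*n)^(k+1) / (Nat.factorial (k+1)) / n) • J := by
    intro k
    have hn0 : (n:ℝ) ≠ 0 := by positivity
    have hf : (Nat.factorial (k+1) : ℝ) ≠ 0 := by
      exact_mod_cast Nat.factorial_ne_zero (k+1)
    rw [smul_pow, J_pow, smul_smul, smul_smul]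
    congr 1
    rw [mul_pow]
    field_simp
    ring
  simp only [h1]
  have hg : Summable fun k : ℕ => (c*n)^(k+1) / (Nat.factorial (k+1)) / (n:ℝ) := by
    have := (Real.summable_pow_div_factorial (c*n)).comp_injective Nat.succ_injective
    exact this.div_const _
  rw [Summable.tsum_smul_const hg]
  have hshift : ∑' k : ℕ, (c*n)^(k+1) / (Nat.factorial (k+1) : ℝ) = Real.exp (c*n) - 1 := by
    have hs : Summable fun k : ℕ => (c*n)^k / (Nat.factorial k : ℝ) := Real.summable_pow_div_factorial (c*n)
    have := Summable.tsum_eq_zero_add hs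
    have he : Real.exp (c*n) = ∑' k : ℕ, (c*n)^k / (Nat.factorial k : ℝ) := by
      rw [Real.exp_eq_exp_ℝ, NormedSpace.exp_eq_tsum_div]
    rw [he, this]; simp
  have : ∑' k : ℕ, (c*n)^(k+1) / ((Nat.factorial (k+1) : ℕ):ℝ) / (n:ℝ)
      = (Real.exp (c*n) - 1) / n := by
    rw [tsum_div_const, hshift]
  rw [this]
  simp [Nat.factorial_zero]

end aux

theorem kgf_infinite_bandwidth_limit {n : ℕ} (hn : 0 < n) (t : ℝ) (ht : 0 < t)
    (y : Fin n → ℝ) :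
    Tendsto
      (fun ε : ℝ =>
        (fun _ => (1 : ℝ)) ⬝ᵥ
          ((Matrix.of fun _ _ => (1 : ℝ)) + ε • (1 : Matrix (Fin n) (Fin n) ℝ))⁻¹ *ᵥ
            (((1 : Matrix (Fin n) (Fin n) ℝ) -
              NormedSpace.exp
                (-t • (Matrix.of fun _ _ => (1 : ℝ) : Matrix (Fin n) (Fin n) ℝ))) *ᵥ y))
      (nhdsWithin 0 (Set.Ioi 0))
      (nhds ((1 - Real.exp (-t * n)) * ((1 / n) * ∑ i, y i))) := by
  set J : Matrix (Fin n) (Fin n) ℝ := Matrix.of fun _ _ => (1:ℝ) with hJ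
  have hn' : (0:ℝ) < n := by exact_mod_cast hn
  have hexp : (1 : Matrix (Fin n) (Fin n) ℝ) - NormedSpace.exp (-t • J)
      = ((1 - Real.exp (-t * n)) / n) • J := by
    rw [exp_smul_J n hn (-t)]
    rw [sub_add_eq_sub_sub]
    simp only [sub_self, zero_sub, ← neg_smul]
    congr 1
    ring
  -- key: value on Ioi 0
  have key : ∀ ε ∈ Set.Ioi (0:ℝ),
      ((fun _ => (1 : ℝ)) ⬝ᵥ
          (J + ε • (1 : Matrix (Fin n) (Fin n) ℝ))⁻¹ *ᵥ
            (((1 : Matrix (Fin n) (Fin n) ℝ) - NormedSpace.exp (-t • J)) *ᵥ y))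
        = (1 - Real.exp (-t * n)) * (∑ i, y i) / (n + ε) := by
    intro ε hε
    have hε' : (0:ℝ) < ε := hε
    have hne : (n:ℝ) + ε ≠ 0 := by positivity
    have hinv : (J + ε • (1 : Matrix (Fin n) (Fin n) ℝ))⁻¹
        = ε⁻¹ • ((1 : Matrix (Fin n) (Fin n) ℝ) - ((n:ℝ)+ε)⁻¹ • J) := by
      apply Matrix.inv_eq_right_inv
      simp only [Matrix.mul_smul, Matrix.smul_mul, Matrix.add_mul, Matrix.mul_sub,
        Matrix.one_mul, Matrix.mul_one, J_mul_J, smul_smul]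
      ext i j
      simp only [Matrix.add_apply, Matrix.sub_apply, Matrix.smul_apply, Matrix.one_apply,
        smul_eq_mul, hJ, Matrix.of_apply]
      by_cases h : i = j <;>
        simp [h, Matrix.mul_apply, Finset.sum_const, Finset.card_univ] <;> field_simp <;> ring <;> simp
    rw [hinv, hexp]
    simp only [Matrix.smul_mulVec, Matrix.mulVec_smul, dotProduct_smul, smul_eq_mul]
    have hJy : J *ᵥ y = fun _ => ∑ i, y i := by
      ext i; simp [Matrix.mulVec, dotProduct, hJ]
    rw [hJy]
    have h2 : ((1 : Matrix (Fin n) (Fin n) ℝ) - ((n:ℝ)+ε)⁻¹ • J) *ᵥ (fun _ => ∑ i, y i)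
        = fun _ => (ε / ((n:ℝ)+ε)) * ∑ i, y i := by
      ext i
      simp only [Matrix.sub_mulVec, Matrix.smul_mulVec, Pi.sub_apply, Pi.smul_apply,
        Matrix.one_mulVec, smul_eq_mul]
      have : J *ᵥ (fun _ => ∑ i, y i) = fun _ => (n:ℝ) * ∑ i, y i := by
        ext i; simp [Matrix.mulVec, dotProduct, hJ, mul_comm]
      rw [this]
      field_simp
      ring
    rw [h2]
    simp only [dotProduct]
    rw [Finset.sum_const, Finset.card_univ, Fintype.card_fin]
    rw [nsmul_eq_mul]
    field_simp
  have hlim : Tendsto (fun ε : ℝ => (1 - Real.exp (-t * n)) * (∑ i, y i) / ((n:ℝ) + ε))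
      (nhdsWithin 0 (Set.Ioi 0)) (nhds ((1 - Real.exp (-t * n)) * ((1 / n) * ∑ i, y i))) := by
    have hcont : Tendsto (fun ε : ℝ => (1 - Real.exp (-t * n)) * (∑ i, y i) / ((n:ℝ) + ε))
        (nhds 0) (nhds ((1 - Real.exp (-t * n)) * (∑ i, y i) / ((n:ℝ) + 0))) := by
      apply Tendsto.div tendsto_const_nhds (tendsto_const_nhds.add tendsto_id)
      positivity
    have h2 : Tendsto (fun ε : ℝ => (1 - Real.exp (-t * n)) * (∑ i, y i) / ((n:ℝ) + ε))
        (nhdsWithin 0 (Set.Ioi 0)) (nhds ((1 - Real.exp (-t * n)) * (∑ i, y i) / ((n:ℝ) + 0))) :=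
      hcont.mono_left nhdsWithin_le_nhds
    convert h2 using 2
    field_simp
    ring
  exact Tendsto.congr' (by filter_upwards [self_mem_nhdsWithin] with ε hε; exact (key ε hε).symm) hlim
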